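/- Let c > 0, {A_i}_{i=0}^∞ a nonnegative sequence, and S_t = Σ_{i=0}^t A_i. Then Σ_{i=0}^t A_i / (c + S_i) ≤ log(1 + S_t/c). -/

import Mathlib

lemma aux_log_bound (a b : ℝ) (ha : 0 < a) (hb : 0 ≤ b) :
    b / (a + b) ≤ Real.log ((a + b) / a) := by
  have hab : 0 < a + b := by linarith
  have h1 : 0 < a / (a + b) := by positivity
  have h2 := Real.log_le_sub_one_of_pos h1
  have h3 : Real.log (a / (a + b)) = - Real.log ((a + b) / a) := by
    rw [← Real.log_inv]
    congr 1
    field_simp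
  rw [h3] at h2
  have h4 : a / (a + b) - 1 = - (b / (a + b)) := by
    field_simp
    ring
  linarith [h2, h4.symm ▸ h2]

theorem adagrad_log_sum_bound (c : ℝ) (hc : 0 < c) (A : ℕ → ℝ) (hA : ∀ i, 0 ≤ A i)
    (S : ℕ → ℝ) (hS : ∀ t, S t = ∑ i ∈ Finset.range (t + 1), A i) :
    ∀ t, ∑ i ∈ Finset.range (t + 1), A i / (c + S i) ≤ Real.log (1 + S t / c) := by
  have hSnn : ∀ t, 0 ≤ S t := by
    intro t; rw [hS t]; exact Finset.sum_nonneg fun i _ => hA i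
  have hrw : ∀ t, 1 + S t / c = (c + S t) / c := by
    intro t; field_simp
  intro t
  induction t with
  | zero =>
    rw [Finset.sum_range_one, hrw 0]
    have h := aux_log_bound c (S 0) hc (hSnn 0)
    have : A 0 = S 0 := by rw [hS 0, Finset.sum_range_one]
    rw [this]
    exact h
  | succ n ih =>
    rw [Finset.sum_range_succ]
    have hstep : S (n + 1) = S n + A (n + 1) := by
      rw [hS (n + 1), hS n, Finset.sum_range_succ]
    have h := aux_log_bound (c + S n) (A (n + 1)) (by linarith [hSnn n]) (hA (n + 1))
    have hcn : 0 < c + S n := by linarith [hSnn n]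
    have hcn1 : 0 < c + S (n + 1) := by linarith [hSnn (n + 1)]
    have key : A (n + 1) / (c + S (n + 1)) ≤
        Real.log (1 + S (n + 1) / c) - Real.log (1 + S n / c) := by
      rw [hrw, hrw, ← Real.log_div (by positivity) (by positivity)]
      have : (c + S (n + 1)) / c / ((c + S n) / c) = (c + S (n + 1)) / (c + S n) := by
        field_simp
      rw [this]
      have : c + S (n + 1) = (c + S n) + A (n + 1) := by rw [hstep]; ring
      rw [this]
      exact h
    linarith
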